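/- For a toric monoid P with associated dual cone σ_P = Hom(P, ℝ_{≥0}), the assignment sending a face τ of σ_P to 𝔭_τ := P − (τ^⊥ ∩ P) is a bijection between the faces of σ_P and the prime ideals of P. -/

import Mathlib

theorem my_farkas {V : Type*} [AddCommGroup V] [Module ℚ V] :
    ∀ (m : ℕ) (t : Fin m → V) (y : V),
      (¬ ∃ lam : Fin m → ℚ, (∀ i, 0 ≤ lam i) ∧ ∑ i, lam i • t i = y) →
      ∃ f : V →ₗ[ℚ] ℚ, (∀ i, 0 ≤ f (t i)) ∧ f y < 0 := by
  intro m
  induction m with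
  | zero =>
    intro t y h
    have hy : y ≠ 0 := by
      rintro rfl
      exact h ⟨fun i => 0, fun i => le_rfl, by simp⟩
    have : ¬ ∀ φ : Module.Dual ℚ V, φ y = 0 := by
      rw [Module.forall_dual_apply_eq_zero_iff]; exact hy
    push_neg at this
    obtain ⟨φ, hφ⟩ := this
    rcases lt_or_gt_of_ne hφ with h1 | h1
    · exact ⟨φ, fun i => i.elim0, h1⟩
    · exact ⟨-φ, fun i => i.elim0, by simpa using h1⟩
  | succ m ih =>
    intro t y h
    set x := t (Fin.last m) with hx
    set S : Fin m → V := fun i => t i.castSucc with hS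
    have hS' : ¬ ∃ lam : Fin m → ℚ, (∀ i, 0 ≤ lam i) ∧ ∑ i, lam i • S i = y := by
      rintro ⟨lam, h0, hsum⟩
      refine h ⟨Fin.lastCases 0 lam, ?_, ?_⟩
      · intro i
        induction i using Fin.lastCases with
        | last => simp
        | cast i => simpa using h0 i
      · rw [Fin.sum_univ_castSucc]
        simpa using hsum
    obtain ⟨f, hf0, hfy⟩ := ih S y hS'
    by_cases hfx : 0 ≤ f x
    · refine ⟨f, ?_, hfy⟩
      intro i
      induction i using Fin.lastCases with
      | last => exact hfx
      | cast i => exact hf0 i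
    · push_neg at hfx
      set π : V →ₗ[ℚ] V := LinearMap.id - (f x)⁻¹ • (LinearMap.smulRight f x) with hπ
      have hπapp : ∀ z, π z = z - ((f x)⁻¹ * f z) • x := by
        intro z; simp [hπ, mul_smul, LinearMap.smulRight_apply]
      have hπx : π x = 0 := by
        rw [hπapp, inv_mul_cancel₀ (ne_of_lt hfx), one_smul, sub_self]
      have hS'' : ¬ ∃ lam : Fin m → ℚ, (∀ i, 0 ≤ lam i) ∧ ∑ i, lam i • π (S i) = π y := by
        rintro ⟨lam, h0, hsum⟩
        have key : y = ∑ i, lam i • S i +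
            ((f x)⁻¹ * (f y - ∑ i, lam i * f (S i))) • x := by
          have : ∑ i, lam i • (S i - ((f x)⁻¹ * f (S i)) • x)
              = y - ((f x)⁻¹ * f y) • x := by
            rw [← hπapp]
            rw [← hsum]
            congr 1
            ext i
            rw [hπapp]
          simp only [smul_sub] at this
          rw [Finset.sum_sub_distrib] at this
          have h2 : ∑ i, lam i • ((f x)⁻¹ * f (S i)) • x
              = ((f x)⁻¹ * ∑ i, lam i * f (S i)) • x := by
            rw [Finset.mul_sum, Finset.sum_smul]
            refine Finset.sum_congr rfl fun i _ => ?_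
            rw [smul_smul]
            congr 1
            ring
          rw [h2] at this
          rw [mul_sub, sub_smul]
          linear_combination (norm := module) -this
        have hμ : 0 < (f x)⁻¹ * (f y - ∑ i, lam i * f (S i)) := by
          have h1 : ∑ i, lam i * f (S i) ≥ 0 :=
            Finset.sum_nonneg fun i _ => mul_nonneg (h0 i) (hf0 i)
          have h2 : f y - ∑ i, lam i * f (S i) < 0 := by linarith
          exact mul_pos_of_neg_of_neg (inv_neg''.mpr hfx) h2
        refine h ⟨Fin.lastCases ((f x)⁻¹ * (f y - ∑ i, lam i * f (S i))) lam, ?_, ?_⟩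
        · intro i
          induction i using Fin.lastCases with
          | last => simpa using le_of_lt hμ
          | cast i => simpa using h0 i
        · rw [Fin.sum_univ_castSucc]
          simp only [Fin.lastCases_castSucc, Fin.lastCases_last]
          rw [← key]
      obtain ⟨g, hg0, hgy⟩ := ih (fun i => π (S i)) (π y) hS''
      refine ⟨g.comp π, ?_, hgy⟩
      intro i
      induction i using Fin.lastCases with
      | last => simp [← hx, hπx]
      | cast i => exact hg0 i

theorem my_farkas' {V : Type*} [AddCommGroup V] [Module ℚ V] {ι : Type*} [Fintype ι]
    (t : ι → V) (y : V)
    (h : ¬ ∃ lam : ι → ℚ, (∀ i, 0 ≤ lam i) ∧ ∑ i, lam i • t i = y) :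
    ∃ f : V →ₗ[ℚ] ℚ, (∀ i, 0 ≤ f (t i)) ∧ f y < 0 := by
  obtain ⟨e⟩ : Nonempty (Fin (Fintype.card ι) ≃ ι) := ⟨(Fintype.equivFin ι).symm⟩
  have hc : ¬ ∃ lam : Fin (Fintype.card ι) → ℚ, (∀ i, 0 ≤ lam i) ∧
      ∑ i, lam i • (t ∘ e) i = y := by
    rintro ⟨lam, h0, hsum⟩
    refine h ⟨lam ∘ e.symm, fun i => h0 _, ?_⟩
    rw [← hsum, ← Equiv.sum_comp e (fun i => (lam ∘ e.symm) i • t i)]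
    simp
  obtain ⟨f, hf0, hfy⟩ := my_farkas (Fintype.card ι) (t ∘ e) y hc
  exact ⟨f, fun i => by simpa using hf0 (e.symm i), hfy⟩

lemma my_den_mul_self (q : ℚ) : (q.den : ℚ) * q = (q.num : ℚ) := by
  have hd : ((q.den : ℚ)) ≠ 0 := Nat.cast_ne_zero.mpr q.den_nz
  have h1 : q = (q.num : ℚ) / (q.den : ℚ) := (Rat.num_div_den q).symm
  nth_rewrite 2 [h1]
  field_simp

lemma my_mul_den_int (q : ℚ) (n : ℕ) (h : q.den ∣ n) : ∃ z : ℤ, (n : ℚ) * q = (z : ℚ) := by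
  obtain ⟨k, rfl⟩ := h
  refine ⟨q.num * k, ?_⟩
  push_cast
  rw [mul_comm (q.den : ℚ) (k : ℚ), mul_assoc, my_den_mul_self]
  ring

set_option maxHeartbeats 2000000 in
theorem exists_face_of_prime {P : Type*} [AddCommMonoid P]
    (hFG : AddMonoid.FG P) (hc : ∀ a b c : P, a + b = a + c → b = c)
    {I : Set P} (hIdeal : ∀ p x : P, x ∈ I → p + x ∈ I) (hProper : I ≠ Set.univ)
    (hPrime : ∀ p q : P, p + q ∈ I → p ∈ I ∨ q ∈ I) :
    ∃ u : P, {p : P | ∃ v : {v : P →+ ℝ // ∀ p : P, 0 ≤ v p}, v.1 u = 0 ∧ v.1 p ≠ 0} = I := by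
  classical
  -- generators
  obtain ⟨S0, hS0⟩ := hFG.fg_top
  set ι₀ := {x // x ∈ S0} with hι₀
  set g : ι₀ → P := fun i => i.1 with hg
  have hgen : AddSubmonoid.closure (Set.range g) = ⊤ := by
    have : Set.range g = ↑S0 := by
      ext x; simp only [hg, Set.mem_range, Finset.coe_sort_coe, Finset.mem_coe]
      exact ⟨fun ⟨y, hy⟩ => hy ▸ y.2, fun hx => ⟨⟨x, hx⟩, rfl⟩⟩
    rw [this, hS0]
  -- the evaluation hom from ℕ^ι₀
  set φ : (ι₀ → ℕ) →+ P :=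
    { toFun := fun a => ∑ i, a i • g i
      map_zero' := by simp
      map_add' := fun a b => by
        simp only [Pi.add_apply, add_nsmul]
        exact Finset.sum_add_distrib } with hφdef
  have hφapp : ∀ a : ι₀ → ℕ, φ a = ∑ i, a i • g i := fun a => rfl
  have hφsingle : ∀ i : ι₀, φ (Pi.single i 1) = g i := by
    intro i
    rw [hφapp]
    rw [Finset.sum_eq_single i]
    · simp
    · intro j _ hj; simp [Pi.single_apply, hj.symm]
    · simp
  have hφ : Function.Surjective φ := by
    intro p
    have hp : p ∈ AddSubmonoid.closure (Set.range g) := by rw [hgen]; trivial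
    induction hp using AddSubmonoid.closure_induction with
    | mem x hx =>
      obtain ⟨i, rfl⟩ := hx
      exact ⟨Pi.single i 1, hφsingle i⟩
    | zero => exact ⟨0, map_zero φ⟩
    | add x y _ _ hx hy =>
      obtain ⟨A, rfl⟩ := hx; obtain ⟨B, rfl⟩ := hy
      exact ⟨A + B, map_add φ A B⟩
  -- the complement face
  set Q : Set P := Iᶜ with hQdef
  have h0Q : (0 : P) ∈ Q := by
    intro h0
    exact hProper (Set.eq_univ_of_forall fun p => by simpa using hIdeal p 0 h0)
  have hQadd : ∀ {x y : P}, x ∈ Q → y ∈ Q → x + y ∈ Q :=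
    fun hx hy hxy => (hPrime _ _ hxy).elim hx hy
  set QM : AddSubmonoid P := ⟨⟨Q, fun hx hy => hQadd hx hy⟩, h0Q⟩ with hQM
  have hface : ∀ x y : P, x + y ∈ Q → y ∈ Q := fun x y hxy hy => hxy (hIdeal x y hy)
  have hface' : ∀ x y : P, x + y ∈ Q → x ∈ Q := fun x y hxy =>
    hface y x (by rwa [add_comm])
  have hsupp : ∀ a : ι₀ → ℕ, φ a ∈ Q → ∀ i, a i ≠ 0 → g i ∈ Q := by
    intro a ha i hi
    obtain ⟨k, hk⟩ : ∃ k, a i = k + 1 := ⟨a i - 1, by omega⟩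
    have e1 : φ a = a i • g i + ∑ j ∈ Finset.univ.erase i, a j • g j :=
      (Finset.add_sum_erase _ _ (Finset.mem_univ i)).symm
    have e2 : φ a = g i + (k • g i + ∑ j ∈ Finset.univ.erase i, a j • g j) := by
      rw [e1, hk, succ_nsmul]
      abel
    exact hface' _ _ (e2 ▸ ha)
  -- membership of sums in Q
  have hQsum : ∀ b : ι₀ → ℕ, (∀ i, b i ≠ 0 → g i ∈ Q) → φ b ∈ Q := by
    intro b hb
    rw [hφapp]
    refine AddSubmonoid.sum_mem QM (fun i _ => ?_)
    by_cases hbi : b i = 0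
    · rw [hbi]; simpa using h0Q
    · exact AddSubmonoid.nsmul_mem QM (hb i hbi) _
  -- coercion homs
  set c1 : (ι₀ → ℕ) →+ (ι₀ → ℤ) :=
    AddMonoidHom.mk' (fun a i => (a i : ℤ))
      (fun a b => by funext i; simp) with hc1
  set c2 : (ι₀ → ℤ) →+ (ι₀ → ℚ) :=
    AddMonoidHom.mk' (fun a i => (a i : ℚ))
      (fun a b => by funext i; simp) with hc2
  have hc1inj : Function.Injective c1 :=
    fun a b hab => funext fun i => Nat.cast_injective (congrFun hab i)
  have hc2inj : Function.Injective c2 :=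
    fun a b hab => funext fun i => Int.cast_injective (congrFun hab i)
  -- the relation subgroup
  set K : AddSubgroup (ι₀ → ℤ) :=
    { carrier := {x | ∃ a b, φ a = φ b ∧ x = c1 a - c1 b}
      add_mem' := by
        rintro x y ⟨a, b, hab, rfl⟩ ⟨a', b', hab', rfl⟩
        refine ⟨a + a', b + b', by rw [map_add, map_add, hab, hab'], ?_⟩
        rw [map_add, map_add]; abel
      zero_mem' := ⟨0, 0, rfl, by simp⟩
      neg_mem' := by
        rintro x ⟨a, b, hab, rfl⟩
        exact ⟨b, a, hab.symm, by abel⟩ } with hK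
  obtain ⟨T, hT⟩ := IsNoetherian.noetherian (AddSubgroup.toIntSubmodule K)
  have hTK : ∀ x ∈ T, x ∈ K := fun x hx => by
    have h1 : x ∈ Submodule.span ℤ (↑T : Set (ι₀ → ℤ)) := Submodule.subset_span hx
    rw [hT] at h1
    exact h1
  -- the element u
  set χ : ι₀ → ℕ := fun i => if g i ∈ Q then 1 else 0 with hχ
  set u : P := φ χ with hu
  have huQ : u ∈ Q := hQsum χ (fun i hi => by
    by_contra hgi
    simp [hχ, hgi] at hi)
  refine ⟨u, ?_⟩
  ext p
  simp only [Set.mem_setOf_eq]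
  constructor
  · rintro ⟨v, hvu, hvp⟩
    by_contra hpI
    have hpQ : p ∈ Q := hpI
    have hvφ : ∀ b : ι₀ → ℕ, v.1 (φ b) = ∑ i, (b i : ℝ) * v.1 (g i) := by
      intro b
      rw [hφapp, map_sum]
      refine Finset.sum_congr rfl fun i _ => ?_
      rw [AddMonoidHom.map_nsmul, nsmul_eq_mul]
    have hvg : ∀ i, g i ∈ Q → v.1 (g i) = 0 := by
      intro i hi
      have h1 : ∑ j, (χ j : ℝ) * v.1 (g j) = 0 := by rw [← hvφ, ← hu, hvu]
      have h2 : ∀ j ∈ Finset.univ, 0 ≤ (χ j : ℝ) * v.1 (g j) := fun j _ =>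
        mul_nonneg (by positivity) (v.2 (g j))
      have h3 := (Finset.sum_eq_zero_iff_of_nonneg h2).mp h1 i (Finset.mem_univ i)
      rw [hχ] at h3
      simp only [hi, if_true] at h3
      simpa using h3
    obtain ⟨b, hb⟩ := hφ p
    have hvp0 : v.1 p = 0 := by
      rw [← hb, hvφ]
      refine Finset.sum_eq_zero fun i _ => ?_
      by_cases hbi : b i = 0
      · simp [hbi]
      · rw [hvg i (hsupp b (by rwa [hb]) i hbi), mul_zero]
    exact hvp hvp0
  · intro hpI
    set rep : P → (ι₀ → ℕ) := fun q => (hφ q).choose with hrepdef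
    have hrep : ∀ q, φ (rep q) = q := fun q => (hφ q).choose_spec
    set a : ι₀ → ℕ := rep p with hadef
    set ε : ι₀ → (ι₀ → ℚ) := fun i => Pi.single i 1 with hεdef
    set t : (ι₀ ⊕ (ι₀ ⊕ (↥T ⊕ ↥T))) → (ι₀ → ℚ) :=
      Sum.elim (fun i => ε i)
        (Sum.elim (fun i => if g i ∈ Q then -ε i else ε i)
          (Sum.elim (fun x => c2 x.1) (fun x => -c2 x.1))) with htdef
    have hcone : ¬ ∃ lam : (ι₀ ⊕ (ι₀ ⊕ (↥T ⊕ ↥T))) → ℚ,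
        (∀ i, 0 ≤ lam i) ∧ ∑ i, lam i • t i = -(c2 (c1 a)) := by
      rintro ⟨lam, h0, hsum⟩
      rw [Fintype.sum_sum_type] at hsum
      rw [Fintype.sum_sum_type] at hsum
      rw [Fintype.sum_sum_type] at hsum
      simp only [htdef, Sum.elim_inl, Sum.elim_inr] at hsum
      set cq : ι₀ → ℚ := fun i => lam (Sum.inl i) +
        (if g i ∈ Q then -lam (Sum.inr (Sum.inl i)) else lam (Sum.inr (Sum.inl i))) with hcq
      set dq : {x // x ∈ T} → ℚ := fun x =>
        lam (Sum.inr (Sum.inr (Sum.inl x))) - lam (Sum.inr (Sum.inr (Sum.inr x))) with hdq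
      have Hsum1 : ∑ i, cq i • ε i =
          ∑ i, lam (Sum.inl i) • ε i +
          ∑ i, lam (Sum.inr (Sum.inl i)) • (if g i ∈ Q then -ε i else ε i) := by
        rw [← Finset.sum_add_distrib]
        refine Finset.sum_congr rfl fun i _ => ?_
        by_cases hgi : g i ∈ Q
        · simp only [hcq, hgi, if_true]
          module
        · simp only [hcq, hgi, if_false]
          module
      have Hsum2 : ∑ x : {x // x ∈ T}, dq x • c2 x.1 =
          ∑ x : {x // x ∈ T}, lam (Sum.inr (Sum.inr (Sum.inl x))) • c2 x.1 +
          ∑ x : {x // x ∈ T}, lam (Sum.inr (Sum.inr (Sum.inr x))) • (-c2 x.1) := by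
        rw [← Finset.sum_add_distrib]
        refine Finset.sum_congr rfl fun x _ => ?_
        simp only [hdq]
        module
      have Heq : ∑ i, cq i • ε i + ∑ x : {x // x ∈ T}, dq x • c2 x.1 = -(c2 (c1 a)) := by
        rw [Hsum1, Hsum2, ← hsum]
        abel
      set N : ℕ := (∏ i, (cq i).den) * (∏ x : {x // x ∈ T}, (dq x).den) with hN
      have hNpos : 0 < N :=
        mul_pos (Finset.prod_pos fun i _ => Nat.pos_of_ne_zero (Rat.den_nz _))
          (Finset.prod_pos fun x _ => Nat.pos_of_ne_zero (Rat.den_nz _))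
      have hCex : ∀ i : ι₀, ∃ z : ℤ, (N : ℚ) * cq i = (z : ℚ) := fun i =>
        my_mul_den_int _ _ (dvd_mul_of_dvd_left (Finset.dvd_prod_of_mem _ (Finset.mem_univ i)) _)
      have hDex : ∀ x : {x // x ∈ T}, ∃ z : ℤ, (N : ℚ) * dq x = (z : ℚ) := fun x =>
        my_mul_den_int _ _ (dvd_mul_of_dvd_right (Finset.dvd_prod_of_mem _ (Finset.mem_univ x)) _)
      set C : ι₀ → ℤ := fun i => (hCex i).choose with hCdef
      have hC : ∀ i, ((C i : ℚ)) = (N : ℚ) * cq i := fun i => ((hCex i).choose_spec).symm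
      set D : {x // x ∈ T} → ℤ := fun x => (hDex x).choose with hDdef
      have hD : ∀ x, ((D x : ℚ)) = (N : ℚ) * dq x := fun x => ((hDex x).choose_spec).symm
      have hCnn : ∀ i, g i ∉ Q → 0 ≤ C i := by
        intro i hgi
        have h1 : 0 ≤ cq i := by
          simp only [hcq, hgi, if_false]
          have := h0 (Sum.inl i)
          have := h0 (Sum.inr (Sum.inl i))
          linarith
        have h2 : (0:ℚ) ≤ (C i : ℚ) := by
          rw [hC]
          positivity
        exact_mod_cast h2
      have HeqN : ∑ i, (C i : ℚ) • ε i + ∑ x : {x // x ∈ T}, (D x : ℚ) • c2 x.1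
          = (N : ℚ) • (-(c2 (c1 a))) := by
        rw [← Heq, smul_add, Finset.smul_sum, Finset.smul_sum]
        congr 1
        · exact Finset.sum_congr rfl fun i _ => by rw [smul_smul, ← hC]
        · exact Finset.sum_congr rfl fun x _ => by rw [smul_smul, ← hD]
      have hεC : ∑ i, (C i : ℚ) • ε i = c2 C := by
        funext j
        simp only [Finset.sum_apply, Pi.smul_apply, hεdef, Pi.single_apply,
          smul_eq_mul, mul_ite, mul_one, mul_zero, Finset.sum_ite_eq]
        simp [hc2]
        rw [Finset.sum_eq_single j (fun x _ hx => if_neg (Ne.symm hx)) (fun h => absurd (Finset.mem_univ j) h), if_pos rfl]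
      have hTD : ∑ x : {x // x ∈ T}, (D x : ℚ) • c2 x.1
          = c2 (∑ x : {x // x ∈ T}, D x • x.1) := by
        rw [map_sum]
        exact Finset.sum_congr rfl fun x _ => by
          rw [Int.cast_smul_eq_zsmul, map_zsmul]
      have hNa : (N : ℚ) • (-(c2 (c1 a))) = c2 (-(N • c1 a)) := by
        rw [map_neg, map_nsmul, smul_neg, Nat.cast_smul_eq_nsmul]
      have Ceq : C + (∑ x : {x // x ∈ T}, D x • x.1) = -(N • c1 a) := by
        apply hc2inj
        rw [map_add, ← hεC, ← hTD, HeqN, hNa]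
      set k0 : ι₀ → ℤ := ∑ x : {x // x ∈ T}, D x • x.1 with hk0
      have hk0K : k0 ∈ K :=
        AddSubgroup.sum_mem K fun x _ => AddSubgroup.zsmul_mem K (hTK x.1 x.2) _
      obtain ⟨b₁, b₂, hb₁₂, hk0eq⟩ := hk0K
      set m : ι₀ → ℕ := fun i => (C i).toNat with hm
      set m' : ι₀ → ℕ := fun i => (-(C i)).toNat with hm'
      have hCm : C = c1 m - c1 m' := by
        funext i
        show C i = ((C i).toNat : ℤ) - (((-(C i)).toNat : ℤ))
        omega
      have hm'Q : ∀ i, m' i ≠ 0 → g i ∈ Q := by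
        intro i hi
        by_contra hgi
        have h3 := hCnn i hgi
        have h4 : (-(C i)).toNat ≠ 0 := hi
        omega
      have hZeq : c1 (N • a + m + b₁) = c1 (m' + b₂) := by
        have h8 : (c1 m - c1 m') + (c1 b₁ - c1 b₂) = -(N • c1 a) := by
          rw [← hCm, ← hk0eq]
          exact Ceq
        simp only [map_add, map_nsmul]
        linear_combination (norm := abel) h8
      have hNeq : N • a + m + b₁ = m' + b₂ := hc1inj hZeq
      have hφa : φ a = p := by rw [hadef]; exact hrep p
      have hPeq : N • p + φ m + φ b₁ = φ m' + φ b₂ := by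
        have h9 := congrArg φ hNeq
        rw [map_add, map_add, map_add, map_nsmul, hφa] at h9
        exact h9
      have hcan : N • p + φ m = φ m' := by
        apply hc (φ b₁)
        calc φ b₁ + (N • p + φ m) = N • p + φ m + φ b₁ := by abel
        _ = φ m' + φ b₂ := hPeq
        _ = φ m' + φ b₁ := by rw [← hb₁₂]
        _ = φ b₁ + φ m' := by abel
      have hm'mem : φ m' ∈ Q := hQsum m' hm'Q
      have hNp : N • p ∈ I := by
        obtain ⟨N', hN'⟩ : ∃ N', N = N' + 1 := ⟨N - 1, by omega⟩
        rw [hN', succ_nsmul]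
        exact hIdeal _ _ hpI
      have hfin : N • p + φ m ∈ I := by
        rw [add_comm]
        exact hIdeal _ _ hNp
      rw [hcan] at hfin
      exact hm'mem hfin
    obtain ⟨f, hf0, hfy⟩ := my_farkas' t (-(c2 (c1 a))) hcone
    have hf1 : ∀ i, 0 ≤ f (ε i) := fun i => hf0 (Sum.inl i)
    have hf2 : ∀ i, g i ∈ Q → f (ε i) = 0 := by
      intro i hi
      have h1 := hf0 (Sum.inr (Sum.inl i))
      simp only [htdef, Sum.elim_inr, Sum.elim_inl, hi, if_true, map_neg] at h1
      linarith [hf1 i]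
    have hf3 : ∀ x : ↥T, f (c2 x.1) = 0 := by
      intro x
      have h1 := hf0 (Sum.inr (Sum.inr (Sum.inl x)))
      have h2 := hf0 (Sum.inr (Sum.inr (Sum.inr x)))
      simp only [htdef, Sum.elim_inr, Sum.elim_inl, map_neg] at h1 h2
      linarith
    have hfKspan : ∀ x ∈ Submodule.span ℤ (↑T : Set (ι₀ → ℤ)), f (c2 x) = 0 := by
      intro x hx
      induction hx using Submodule.span_induction with
      | mem z hz => exact hf3 ⟨z, hz⟩
      | zero => simp
      | add z w _ _ hz hw => rw [map_add, map_add, hz, hw, add_zero]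
      | smul n z _ hz =>
        rw [map_zsmul, map_zsmul, hz, smul_zero]
    have hfK : ∀ x ∈ K, f (c2 x) = 0 := fun x hx => hfKspan x (by rw [hT]; exact hx)
    have hfa : 0 < f (c2 (c1 a)) := by
      have := hfy
      rw [map_neg] at this
      linarith
    have hwd : ∀ b b' : ι₀ → ℕ, φ b = φ b' → f (c2 (c1 b)) = f (c2 (c1 b')) := by
      intro b b' hbb
      have hmem : c1 b - c1 b' ∈ K := ⟨b, b', hbb, rfl⟩
      have h1 := hfK _ hmem
      rw [map_sub, map_sub] at h1
      linarith
    set vf : P → ℝ := fun q => ((f (c2 (c1 (rep q))) : ℚ) : ℝ) with hvfdef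
    have hvadd : ∀ q r : P, vf (q + r) = vf q + vf r := by
      intro q r
      have h1 : φ (rep (q + r)) = φ (rep q + rep r) := by
        rw [map_add, hrep, hrep, hrep]
      have h2 := hwd _ _ h1
      rw [map_add, map_add, map_add] at h2
      simp only [hvfdef]
      rw [h2]
      push_cast
      ring
    set v : P →+ ℝ := AddMonoidHom.mk' vf hvadd with hvdef
    have hL1 : ∀ (b : ι₀ → ℕ), f (c2 (c1 b)) = ∑ i, (b i : ℚ) * f (ε i) := by
      intro b
      have h1 : c2 (c1 b) = ∑ i, (b i : ℚ) • ε i := by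
        funext j
        simp only [Finset.sum_apply, Pi.smul_apply, hεdef, Pi.single_apply,
          smul_eq_mul, mul_ite, mul_one, mul_zero, Finset.sum_ite_eq]
        simp [hc1, hc2]
        rw [Finset.sum_eq_single j (fun x _ hx => if_neg (Ne.symm hx)) (fun h => absurd (Finset.mem_univ j) h), if_pos rfl]
      rw [h1, map_sum]
      refine Finset.sum_congr rfl fun i _ => ?_
      rw [map_smul, smul_eq_mul]
    have hvnn : ∀ q : P, 0 ≤ v q := by
      intro q
      have h1 : (0:ℚ) ≤ f (c2 (c1 (rep q))) := by
        rw [hL1]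
        exact Finset.sum_nonneg fun i _ => mul_nonneg (by positivity) (hf1 i)
      show (0:ℝ) ≤ ((f (c2 (c1 (rep q))) : ℚ) : ℝ)
      exact_mod_cast h1
    have hvQ : ∀ q ∈ Q, vf q = 0 := by
      intro q hq
      have h1 : f (c2 (c1 (rep q))) = 0 := by
        rw [hL1]
        refine Finset.sum_eq_zero fun i _ => ?_
        by_cases hbi : rep q i = 0
        · simp [hbi]
        · rw [hf2 i (hsupp _ (by rw [hrep]; exact hq) i hbi), mul_zero]
      simp only [hvfdef, h1]
      norm_num
    refine ⟨⟨v, hvnn⟩, ?_, ?_⟩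
    · show vf u = 0
      exact hvQ u huQ
    · show vf p ≠ 0
      have h1 := hfa
      rw [hadef] at h1
      simp only [hvfdef]
      exact ne_of_gt (by exact_mod_cast h1)


/-- A toric monoid: finitely generated, integral (cancellative), saturated and
torsion-free commutative monoid. -/
def IsToric (P : Type*) [AddCommMonoid P] : Prop :=
  AddMonoid.FG P ∧
  (∀ a b c : P, a + b = a + c → b = c) ∧
  (∀ (n : ℕ) (p q : P), 0 < n → n • p = n • q → p = q) ∧
  (∀ (n : ℕ) (p q r : P), 0 < n → n • p = n • q + r → ∃ s : P, p = q + s)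

/-- For a toric monoid `P` with dual cone `σ_P = Hom(P, ℝ≥0)` (modelled as the
set of additive homomorphisms `P →+ ℝ` with nonnegative values), the assignment
sending a face `τ` of `σ_P` (the intersection of `σ_P` with a supporting
hyperplane `u^⊥`, `u ∈ P`) to the prime ideal
`𝔭_τ = P − (τ^⊥ ∩ P) = {p | ∃ v ∈ τ, v p ≠ 0}` is a bijection between the
faces of `σ_P` and the prime ideals of `P`. -/
theorem face_prime_ideal_bijection {P : Type*} [AddCommMonoid P] (hP : IsToric P) :
    Set.BijOn
      (fun F : Set {v : P →+ ℝ // ∀ p : P, 0 ≤ v p} => {p : P | ∃ v ∈ F, v.1 p ≠ 0})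
      {F : Set {v : P →+ ℝ // ∀ p : P, 0 ≤ v p} | ∃ u : P, F = {v | v.1 u = 0}}
      {I : Set P | (∀ p x : P, x ∈ I → p + x ∈ I) ∧ I ≠ Set.univ ∧
        ∀ p q : P, p + q ∈ I → p ∈ I ∨ q ∈ I} := by
  obtain ⟨hFG, hc, -, -⟩ := hP
  refine ⟨?_, ?_, ?_⟩
  · rintro F ⟨u, rfl⟩
    refine ⟨?_, ?_, ?_⟩
    · rintro p x ⟨v, hv, hvx⟩
      refine ⟨v, hv, ?_⟩
      rw [map_add]
      have h1 := v.2 p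
      have h2 : 0 < v.1 x := lt_of_le_of_ne (v.2 x) (Ne.symm hvx)
      exact ne_of_gt (by linarith)
    · intro huniv
      have h0 : (0:P) ∈ {p : P | ∃ v ∈ {v : {v : P →+ ℝ // ∀ p : P, 0 ≤ v p} | v.1 u = 0},
          v.1 p ≠ 0} := by
        have huniv' : {p : P | ∃ v ∈ {v : {v : P →+ ℝ // ∀ p : P, 0 ≤ v p} | v.1 u = 0},
            v.1 p ≠ 0} = Set.univ := huniv
        rw [huniv']
        trivial
      obtain ⟨v, -, hv0⟩ := h0
      exact hv0 (map_zero v.1)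
    · rintro p q ⟨v, hv, hpq⟩
      rw [map_add] at hpq
      by_cases hp : v.1 p = 0
      · right
        exact ⟨v, hv, fun h => hpq (by rw [hp, h, add_zero])⟩
      · left
        exact ⟨v, hv, hp⟩
  · rintro F1 ⟨u1, rfl⟩ F2 ⟨u2, rfl⟩ him
    simp only at him
    ext v
    simp only [Set.mem_setOf_eq]
    constructor
    · intro hv
      by_contra h2
      have hmem : u2 ∈ {p : P | ∃ w ∈ {v : {v : P →+ ℝ // ∀ p : P, 0 ≤ v p} | v.1 u1 = 0},
          w.1 p ≠ 0} := ⟨v, hv, h2⟩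
      rw [him] at hmem
      obtain ⟨w, hw, hwu⟩ := hmem
      exact hwu hw
    · intro hv
      by_contra h2
      have hmem : u1 ∈ {p : P | ∃ w ∈ {v : {v : P →+ ℝ // ∀ p : P, 0 ≤ v p} | v.1 u2 = 0},
          w.1 p ≠ 0} := ⟨v, hv, h2⟩
      rw [← him] at hmem
      obtain ⟨w, hw, hwu⟩ := hmem
      exact hwu hw
  · rintro I ⟨hIdeal, hProper, hPrime⟩
    obtain ⟨u, hu⟩ := exists_face_of_prime hFG hc hIdeal hProper hPrime
    refine ⟨{v | v.1 u = 0}, ⟨u, rfl⟩, ?_⟩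
    exact hu
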